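/- arXiv:2207.09080 — 4 statements merged into one kernel-verified Lean document; each statement's English description precedes it below -/
import Mathlib

section
/- Let x be a node of the d^n hypermesh and M a set of nodes with x ∉ M. If every edge containing x contains an element of M, then there exists an injective map m : Fin n → M such that for each k : Fin n, the node m(k) differs from x exactly at coordinate k; consequently M has at least n elements, and for k ≠ k' the nodes m(k) and m(k') differ in exactly two coordinates and hence do not lie in any common edge. -/
/-- The edge (group) through node `x` in direction `k` of the `d^n` hypermesh:
all nodes agreeing with `x` at every coordinate other than `k`. -/
def edgeThrough (n d : ℕ) (k : Fin n) (x : Fin n → Fin d) : Finset (Fin n → Fin d) :=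
  Finset.univ.filter (fun y => ∀ j, j ≠ k → y j = x j)

/-- A set of nodes is an edge of the `d^n` hypermesh when it is the edge through
some node in some direction. -/
def IsEdge (n d : ℕ) (E : Finset (Fin n → Fin d)) : Prop :=
  ∃ k x, E = edgeThrough n d k x

/-- The finset of all edges of the `d^n` hypermesh. -/
def hypermeshEdges (n d : ℕ) : Finset (Finset (Fin n → Fin d)) :=
  Finset.univ.image (fun p : Fin n × (Fin n → Fin d) => edgeThrough n d p.1 p.2)

/-- If every edge containing `x` contains an element of a set `M` of nodes with
`x ∉ M`, then there is an injective map `m : Fin n → M` with `m k` differing from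
`x` exactly at coordinate `k`; consequently `M` has at least `n` elements, and for
`k ≠ k'` the nodes `m k` and `m k'` differ in exactly two coordinates and lie in
no common edge. -/
theorem covered_node_yields_injection {n d : ℕ} (x : Fin n → Fin d)
    (M : Finset (Fin n → Fin d)) (hx : x ∉ M)
    (h : ∀ E : Finset (Fin n → Fin d), IsEdge n d E → x ∈ E → ∃ m ∈ M, m ∈ E) :
    ∃ m : Fin n → (Fin n → Fin d), Function.Injective m ∧
      (∀ k, m k ∈ M ∧ ∀ j, m k j ≠ x j ↔ j = k) ∧
      n ≤ M.card ∧
      ∀ k k', k ≠ k' →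
        (Finset.univ.filter (fun j => m k j ≠ m k' j)).card = 2 ∧
        ¬ ∃ E : Finset (Fin n → Fin d), IsEdge n d E ∧ m k ∈ E ∧ m k' ∈ E := by
  have key : ∀ k : Fin n, ∃ y ∈ M, ∀ j, j ≠ k → y j = x j := by
    intro k
    obtain ⟨y, hyM, hyE⟩ := h (edgeThrough n d k x) ⟨k, x, rfl⟩ (by
      simp [edgeThrough])
    exact ⟨y, hyM, by simpa [edgeThrough] using hyE⟩
  choose m hmM hm using key
  have hne_x : ∀ k, m k k ≠ x k := by
    intro k he
    apply hx
    have : m k = x := by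
      funext j
      by_cases hj : j = k
      · rw [hj]; exact he
      · exact hm k j hj
    exact this ▸ hmM k
  -- m k differs from x exactly at k
  have hdiff : ∀ k j, m k j ≠ x j ↔ j = k := by
    intro k j
    constructor
    · intro hne
      by_contra hjk
      exact hne (hm k j hjk)
    · intro hjk
      rw [hjk]
      exact hne_x k
  have hinj : Function.Injective m := by
    intro k k' he
    by_contra hkk
    exact hne_x k ((congrFun he k).trans (hm k' k hkk))
  refine ⟨m, hinj, fun k => ⟨hmM k, hdiff k⟩, ?_, ?_⟩
  · calc n = (Finset.univ : Finset (Fin n)).card := by simp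
      _ = (Finset.univ.image m).card := (Finset.card_image_of_injective _ hinj).symm
      _ ≤ M.card := Finset.card_le_card (by
        intro y hy
        simp only [Finset.mem_image] at hy
        obtain ⟨k, _, rfl⟩ := hy
        exact hmM k)
  · intro k k' hkk
    have hdk : m k k ≠ m k' k := by
      intro he
      exact hne_x k (he.trans (hm k' k hkk))
    have hdk' : m k k' ≠ m k' k' := by
      intro he
      exact hne_x k' (he.symm.trans (hm k k' (Ne.symm hkk)))
    have heq : (Finset.univ.filter (fun j => m k j ≠ m k' j)) = {k, k'} := by
      ext j
      simp only [Finset.mem_filter, Finset.mem_univ, true_and, Finset.mem_insert,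
        Finset.mem_singleton]
      constructor
      · intro hne
        by_contra hor
        push_neg at hor
        exact hne ((hm k j hor.1).trans (hm k' j hor.2).symm)
      · rintro (hj | hj)
        · rw [hj]; exact hdk
        · rw [hj]; exact hdk'
    constructor
    · rw [heq, Finset.card_insert_of_notMem (by simpa using hkk), Finset.card_singleton]
    · rintro ⟨E, ⟨l, y, rfl⟩, hk, hk'⟩
      simp only [edgeThrough, Finset.mem_filter, Finset.mem_univ, true_and] at hk hk'
      have hagree : ∀ j, j ≠ l → m k j = m k' j := fun j hj =>
        (hk j hj).trans (hk' j hj).symm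
      have hkl : k = l := by
        by_contra hne; exact hdk (hagree k hne)
      have hk'l : k' = l := by
        by_contra hne; exact hdk' (hagree k' hne)
      exact hkk (hkl.trans hk'l.symm)
end

section
/- (Detection Capability, FPR = 0.) Let n ≥ 2, d ≥ 2, and let M be a finite set of nodes (the malicious clients) of the d^n hypermesh such that either |M| < n, or |M| = n and some two distinct elements of M lie in a common edge. Then for every node x ∉ M there exists an edge containing x that contains no element of M; hence no benign client appears in n flagged groups and no benign client is misidentified as malicious. -/
/-- Detection capability of MUD-PQFed (FPR = 0): if the set `M` of malicious
clients satisfies `|M| < n`, or `|M| = n` with two distinct malicious clients in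
a common edge, then every benign node `x ∉ M` lies in some edge containing no
malicious client, so `x` is not misidentified as malicious. -/
theorem fpr_zero {n d : ℕ} (hn : 2 ≤ n) (hd : 2 ≤ d) (M : Finset (Fin n → Fin d))
    (hM : M.card < n ∨ (M.card = n ∧ ∃ a ∈ M, ∃ b ∈ M, a ≠ b ∧
      ∃ E : Finset (Fin n → Fin d), IsEdge n d E ∧ a ∈ E ∧ b ∈ E)) :
    ∀ x : Fin n → Fin d, x ∉ M →
      ∃ E : Finset (Fin n → Fin d), IsEdge n d E ∧ x ∈ E ∧ ∀ m ∈ M, m ∉ E := by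
  classical
  intro x hx
  set B : Finset (Fin n) :=
    Finset.univ.filter (fun k => ∃ m ∈ M, m ∈ edgeThrough n d k x) with hBdef
  set f : Fin n → (Fin n → Fin d) := fun k =>
    if h : ∃ m, m ∈ M ∧ m ∈ edgeThrough n d k x then h.choose else x with hfdef
  have key : ∀ k ∈ B, f k ∈ M ∧ (∀ j, j ≠ k → f k j = x j) ∧ f k k ≠ x k := by
    intro k hk
    rcases Finset.mem_filter.mp hk with ⟨-, m, hmM, hmE⟩
    have h : ∃ m, m ∈ M ∧ m ∈ edgeThrough n d k x := ⟨m, hmM, hmE⟩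
    have hfk : f k = h.choose := by simp [hfdef, h]
    obtain ⟨h1, h2⟩ := h.choose_spec
    rw [hfk]
    refine ⟨h1, ?_, ?_⟩
    · intro j hj
      have := Finset.mem_filter.mp h2
      exact this.2 j hj
    · intro heq
      have hx' : h.choose = x := by
        funext j
        by_cases hj : j = k
        · rw [hj]; exact heq
        · exact (Finset.mem_filter.mp h2).2 j hj
      exact hx (hx' ▸ h1)
  have hinj : Set.InjOn f B := by
    intro k1 hk1 k2 hk2 heq
    by_contra hne
    have h1 := key k1 hk1
    have h2 := key k2 hk2
    have : f k2 k1 = x k1 := h2.2.1 k1 hne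
    rw [← heq] at this
    exact h1.2.2 this
  have hcard : B.card < n := by
    rcases hM with h | ⟨hMn, a, haM, b, hbM, hab, E, ⟨k, z, hE⟩, haE, hbE⟩
    · have : B.card ≤ M.card :=
        Finset.card_le_card_of_injOn f (fun k hk => (key k hk).1) hinj
      omega
    · subst hE
      have hedge : ∀ j, j ≠ k → a j = b j := by
        intro j hj
        have ha := (Finset.mem_filter.mp haE).2 j hj
        have hb := (Finset.mem_filter.mp hbE).2 j hj
        rw [ha, hb]
      have hmiss : (∀ k' ∈ B, f k' ≠ a) ∨ (∀ k' ∈ B, f k' ≠ b) := by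
        by_contra h
        push_neg at h
        obtain ⟨⟨ka, hka, hfa⟩, kb, hkb, hfb⟩ := h
        have hkab : ka ≠ kb := by
          intro h'
          exact hab (hfa ▸ hfb ▸ (by rw [h']))
        have h1 := key ka hka
        have h2 := key kb hkb
        have hka_k : ka = k := by
          by_contra hne
          have hb' : b ka = x ka := by rw [← hfb]; exact h2.2.1 ka hkab
          have ha' : a ka ≠ x ka := by rw [← hfa]; exact h1.2.2
          exact ha' ((hedge ka hne).trans hb')
        have hkb_k : kb = k := by
          by_contra hne
          have ha' : a kb = x kb := by rw [← hfa]; exact h1.2.1 kb (Ne.symm hkab)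
          have hb' : b kb ≠ x kb := by rw [← hfb]; exact h2.2.2
          exact hb' ((hedge kb hne).symm.trans ha')
        exact hkab (hka_k.trans hkb_k.symm)
      rcases hmiss with h | h
      · have hle : B.card ≤ (M.erase a).card :=
          Finset.card_le_card_of_injOn f
            (fun k' hk' => Finset.mem_erase.mpr ⟨h k' hk', (key k' hk').1⟩) hinj
        have := Finset.card_erase_lt_of_mem haM
        omega
      · have hle : B.card ≤ (M.erase b).card :=
          Finset.card_le_card_of_injOn f
            (fun k' hk' => Finset.mem_erase.mpr ⟨h k' hk', (key k' hk').1⟩) hinj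
        have := Finset.card_erase_lt_of_mem hbM
        omega
  have hex : ∃ k, k ∉ B := by
    by_contra h
    push_neg at h
    have hB : B = Finset.univ := Finset.eq_univ_iff_forall.mpr h
    rw [hB, Finset.card_univ, Fintype.card_fin] at hcard
    omega
  obtain ⟨k, hk⟩ := hex
  refine ⟨edgeThrough n d k x, ⟨k, x, rfl⟩, ?_, ?_⟩
  · simp [edgeThrough]
  · intro m hm hmE
    exact hk (Finset.mem_filter.mpr ⟨Finset.mem_univ _, ⟨m, hm, hmE⟩⟩)
end

section
/- (Detection Capability, characterization.) Let n ≥ 2, d ≥ 2, and let M be a finite set of nodes (the malicious clients) of the d^n hypermesh such that either |M| < n, or |M| = n and some two distinct elements of M lie in a common edge. Then for every node x of the hypermesh, every edge containing x contains an element of M if and only if x ∈ M; that is, the detection rule achieves 100% true positive rate and 0% false positive rate. -/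
/-- Detection capability of MUD-PQFed (characterization): under the same
hypotheses on the malicious set `M`, a node `x` has all of its edges flagged
(i.e. every edge containing `x` contains a malicious client) iff `x ∈ M`;
this is a 100% true positive rate and a 0% false positive rate. -/
theorem detection_characterization {n d : ℕ} (hn : 2 ≤ n) (hd : 2 ≤ d)
    (M : Finset (Fin n → Fin d))
    (hM : M.card < n ∨ (M.card = n ∧ ∃ a ∈ M, ∃ b ∈ M, a ≠ b ∧
      ∃ E : Finset (Fin n → Fin d), IsEdge n d E ∧ a ∈ E ∧ b ∈ E)) :
    ∀ x : Fin n → Fin d,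
      (∀ E : Finset (Fin n → Fin d), IsEdge n d E → x ∈ E → ∃ m ∈ M, m ∈ E) ↔ x ∈ M := by
  intro x
  constructor
  · intro hflag
    by_contra hx
    have hchoice : ∀ k : Fin n, ∃ m, m ∈ M ∧ ∀ j, j ≠ k → m j = x j := by
      intro k
      obtain ⟨m, hmM, hmE⟩ := hflag (edgeThrough n d k x) ⟨k, x, rfl⟩
        (by simp [edgeThrough])
      exact ⟨m, hmM, by simpa [edgeThrough] using hmE⟩
    choose m hmM hme using hchoice
    have hmx : ∀ k, m k ≠ x := fun k h => hx (h ▸ hmM k)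
    have hdiff : ∀ k, m k k ≠ x k := by
      intro k h
      apply hmx k
      funext j
      by_cases hj : j = k
      · subst hj; exact h
      · exact hme k j hj
    have hinj : Function.Injective m := by
      intro k k' h
      by_contra hkk
      apply hmx k
      funext j
      by_cases hj : j = k
      · subst hj
        rw [h]
        exact hme k' j (fun e => hkk e)
      · exact hme k j hj
    have hcard : n ≤ M.card := by
      have := Finset.card_le_card_of_injOn (s := (Finset.univ : Finset (Fin n))) m (fun k _ => hmM k) hinj.injOn
      simpa using this
    rcases hM with h | ⟨hc, a, ha, b, hb, hab, E, ⟨k0, z, rfl⟩, haE, hbE⟩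
    · omega
    · have himg : Finset.image m Finset.univ = M := by
        apply Finset.eq_of_subset_of_card_le
        · intro y hy
          simp only [Finset.mem_image, Finset.mem_univ, true_and] at hy
          obtain ⟨k, rfl⟩ := hy
          exact hmM k
        · rw [Finset.card_image_of_injective _ hinj]
          simp [hc]
      have ha' : a ∈ Finset.image m Finset.univ := himg ▸ ha
      have hb' : b ∈ Finset.image m Finset.univ := himg ▸ hb
      simp only [Finset.mem_image, Finset.mem_univ, true_and] at ha' hb'
      obtain ⟨i, rfl⟩ := ha'
      obtain ⟨j, rfl⟩ := hb'
      have hij : i ≠ j := fun e => hab (by rw [e])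
      have haE' : ∀ l, l ≠ k0 → m i l = z l := by
        simpa [edgeThrough] using haE
      have hbE' : ∀ l, l ≠ k0 → m j l = z l := by
        simpa [edgeThrough] using hbE
      have hi : i = k0 := by
        by_contra h
        exact hdiff i (((haE' i h).trans (hbE' i h).symm).trans (hme j i hij))
      have hj : j = k0 := by
        by_contra h
        exact hdiff j (((hbE' j h).trans (haE' j h).symm).trans (hme i j (Ne.symm hij)))
      exact hij (hi.trans hj.symm)
  · intro hxM E _ hxE
    exact ⟨x, hxM, hxE⟩
end

section
/- Let d ≥ 2, let G be an additive commutative group, let w assign to each node of the d^n hypermesh its local model update in G, and for each edge E let s(·, E) : E → G be masks satisfying Σ_{i ∈ E} s(i, E) = 0. Then the total of the masked group aggregates over all edges satisfies Σ_{E edge} Σ_{i ∈ E} (w(i) + s(i, E)) = n • (Σ_{i node} w(i)); hence in the absence of malicious clients the server recovers exactly n times the sum of all true local updates. -/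
lemma mem_edgeThrough_self (n d : ℕ) (k : Fin n) (x : Fin n → Fin d) :
    x ∈ edgeThrough n d k x := by simp [edgeThrough]

lemma edgeThrough_eq_of_mem {n d : ℕ} {k : Fin n} {x y : Fin n → Fin d}
    (h : y ∈ edgeThrough n d k x) : edgeThrough n d k x = edgeThrough n d k y := by
  simp only [edgeThrough, Finset.mem_filter, Finset.mem_univ, true_and] at h
  ext z
  simp only [edgeThrough, Finset.mem_filter, Finset.mem_univ, true_and]
  constructor <;> intro hz j hj
  · rw [hz j hj, ← h j hj]
  · rw [hz j hj, h j hj]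

lemma filter_edges {n d : ℕ} (i : Fin n → Fin d) :
    (hypermeshEdges n d).filter (fun E => i ∈ E) =
      Finset.univ.image (fun k => edgeThrough n d k i) := by
  ext E
  simp only [Finset.mem_filter, hypermeshEdges, Finset.mem_image, Finset.mem_univ, true_and,
    Prod.exists]
  constructor
  · rintro ⟨⟨k, x, rfl⟩, hi⟩
    exact ⟨k, (edgeThrough_eq_of_mem hi).symm⟩
  · rintro ⟨k, rfl⟩
    exact ⟨⟨k, i, rfl⟩, mem_edgeThrough_self ..⟩

lemma edgeThrough_inj {n d : ℕ} (hd : 2 ≤ d) (i : Fin n → Fin d) :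
    Function.Injective (fun k => edgeThrough n d k i) := by
  intro k k' h
  by_contra hne
  haveI : Nontrivial (Fin d) := ⟨⟨⟨0, by omega⟩, ⟨1, by omega⟩, by simp [Fin.ext_iff]⟩⟩
  obtain ⟨c, hc⟩ := exists_ne (i k)
  have h1 : Function.update i k c ∈ edgeThrough n d k i := by
    simp only [edgeThrough, Finset.mem_filter, Finset.mem_univ, true_and]
    intro j hj
    simp [Function.update, hj]
  simp only [] at h
  rw [h] at h1
  have h2 := (Finset.mem_filter.mp h1).2 k hne
  simp [Function.update] at h2
  exact hc h2

lemma card_filter_edges {n d : ℕ} (hd : 2 ≤ d) (i : Fin n → Fin d) :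
    ((hypermeshEdges n d).filter (fun E => i ∈ E)).card = n := by
  rw [filter_edges, Finset.card_image_of_injective _ (edgeThrough_inj hd i),
    Finset.card_univ, Fintype.card_fin]

/-- For `d ≥ 2`, if for every edge `E` the masks `s · E` of the clients in `E`
sum to zero, then the total of the masked group aggregates over all edges equals
`n` times the sum of all true local updates. -/
theorem sum_masked_group_aggregates {n d : ℕ} (hd : 2 ≤ d) (G : Type*)
    [AddCommGroup G] (w : (Fin n → Fin d) → G)
    (s : (Fin n → Fin d) → Finset (Fin n → Fin d) → G)
    (hs : ∀ E ∈ hypermeshEdges n d, ∑ i ∈ E, s i E = 0) :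
    ∑ E ∈ hypermeshEdges n d, ∑ i ∈ E, (w i + s i E) =
      n • ∑ i : Fin n → Fin d, w i := by
  have hsplit : ∀ E ∈ hypermeshEdges n d, ∑ i ∈ E, (w i + s i E) = ∑ i ∈ E, w i := by
    intro E hE
    rw [Finset.sum_add_distrib, hs E hE, add_zero]
  rw [Finset.sum_congr rfl hsplit]
  have h1 : ∀ E ∈ hypermeshEdges n d, ∑ i ∈ E, w i
      = ∑ i : Fin n → Fin d, if i ∈ E then w i else 0 := by
    intro E _
    rw [Finset.sum_ite_mem, Finset.univ_inter]
  rw [Finset.sum_congr rfl h1, Finset.sum_comm]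
  rw [Finset.smul_sum]
  refine Finset.sum_congr rfl fun i _ => ?_
  rw [← Finset.sum_filter, Finset.sum_const, card_filter_edges hd i]
end
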